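/- Let a rotor-router network be imposed on a finite digraph G in which all rotor patterns at non-target vertices have type r for a fixed rotor type r. Suppose every directed cycle of G contains the source, and let d be the largest number of non-target vertices in a simple directed path of G beginning at the source. Then the period of the hitting sequence of the network is at most |r|^d. -/

import Mathlib

open scoped Classical

/-! ### Periodic sequences and rotor types

A rotor type is modelled as a function `f : ℕ → ℕ` (0-based reindexing of the paper's
sequence `r(1), r(2), …`, so the paper's `r(k)` is `f (k-1)`), together with its minimal
period `n`.  The states of the rotor are the values occurring in one period. -/

def IsPeriodicWith {α : Type*} (f : ℕ → α) (n : ℕ) : Prop := ∀ k, f (k + n) = f k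

def IsMinimalPeriod {α : Type*} (f : ℕ → α) (n : ℕ) : Prop :=
  0 < n ∧ IsPeriodicWith f n ∧ ∀ m, 0 < m → IsPeriodicWith f m → n ≤ m

noncomputable def minPeriod {α : Type*} (f : ℕ → α) : ℕ :=
  sInf {n | 0 < n ∧ IsPeriodicWith f n}

/-- `f` (with period `n`) reads the same forwards and backwards:
`r(k) = r(n+1-k)` for `1 ≤ k ≤ n`, written 0-based. -/
def Palindromic (f : ℕ → ℕ) (n : ℕ) : Prop := ∀ k < n, f k = f (n - 1 - k)

/-- `f` (with period `n`) is block-repetitive with block length `m`. -/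
def BlockRepetitive (f : ℕ → ℕ) (n m : ℕ) : Prop :=
  2 ≤ m ∧ m ∣ n ∧ ∀ k : ℕ, ∀ j < m, f (k * m + j) = f (k * m)

def Boppy (f : ℕ → ℕ) (n : ℕ) : Prop := Palindromic f n ∨ ∃ m, BlockRepetitive f n m

/-- The set of states of a rotor type of period `n`. -/
def states (f : ℕ → ℕ) (n : ℕ) : Finset ℕ := (Finset.range n).image f

/-- Number of occurrences of the state `v` among the first `n` terms of `f`. -/
noncomputable def countIn (f : ℕ → ℕ) (n v : ℕ) : ℕ :=
  ((Finset.range n).filter (fun k => f k = v)).card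

/-- Merging reduction `s → s'`: replace every occurrence of `s` by `s'`. -/
def merge (f : ℕ → ℕ) (s s' : ℕ) : ℕ → ℕ := fun k => if f k = s then s' else f k

/-- Destructive reduction `x(s)`: delete every occurrence of `s` and re-index. -/
noncomputable def destroy (f : ℕ → ℕ) (s : ℕ) : ℕ → ℕ :=
  fun k => f (Nat.nth (fun i => f i ≠ s) k)

/-- A two-state rotor type with states `1` and `2`, both occurring. -/
def TwoState (f : ℕ → ℕ) : Prop :=
  (∀ k, f k = 1 ∨ f k = 2) ∧ (∃ k, f k = 1) ∧ (∃ k, f k = 2)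

/-! ### The compressor

The particle's trajectory alternates: at step `t` (0-based) the source `v1` fires its
`(t+1)`-st term `f t`; if it is `1`, the particle moves to `v2`, whose firing count so far
is the number of `1`'s among `f 0, …, f (t-1)`; if it is `2`, it moves to `v3` similarly.
From `v2`/`v3` the particle either returns to the source (no target hit) or hits target
`4`/`5` and restarts at the source.  `X Y : Bool` encode the variation, `true` = `U`:
at `v2` state `1` routes up to `v1` iff `X = true`; at `v3` state `1` routes up iff
`Y = true`. -/

noncomputable def hitAt (X Y : Bool) (r : ℕ → ℕ) (t : ℕ) : Option ℕ :=
  if r t = 1 then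
    (if decide (r (countIn r t 1) = 1) ≠ X then some 4 else none)
  else
    (if decide (r (countIn r t 2) = 1) ≠ Y then some 5 else none)

/-- The hitting sequence of the compressor variation `XY` on rotor type `r`:
the subsequence of recorded targets (`4` or `5`), in order. -/
noncomputable def compSeq (X Y : Bool) (r : ℕ → ℕ) : ℕ → ℕ :=
  fun k => (hitAt X Y r (Nat.nth (fun t => (hitAt X Y r t).isSome = true) k)).getD 4

noncomputable def UUseq (r : ℕ → ℕ) : ℕ → ℕ := compSeq true true r
noncomputable def UDseq (r : ℕ → ℕ) : ℕ → ℕ := compSeq true false r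
noncomputable def DUseq (r : ℕ → ℕ) : ℕ → ℕ := compSeq false true r
noncomputable def DDseq (r : ℕ → ℕ) : ℕ → ℕ := compSeq false false r

/-- The compressor output with targets `4, 5` relabelled as states `1, 2`. -/
noncomputable def compOp (X Y : Bool) (r : ℕ → ℕ) : ℕ → ℕ := fun k => compSeq X Y r k - 3

noncomputable def UUop (r : ℕ → ℕ) : ℕ → ℕ := compOp true true r
noncomputable def UDop (r : ℕ → ℕ) : ℕ → ℕ := compOp true false r
noncomputable def DUop (r : ℕ → ℕ) : ℕ → ℕ := compOp false true r
noncomputable def DDop (r : ℕ → ℕ) : ℕ → ℕ := compOp false false r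

/-- A finite composition of compressor operations (each given by its pair of letters),
with the targets relabelled back to `1, 2` after each application. -/
noncomputable def applyOps (ops : List (Bool × Bool)) (r : ℕ → ℕ) : ℕ → ℕ :=
  ops.foldl (fun s o => compOp o.1 o.2 s) r

/-- The hitting sequence of the depth-2 binary tree network `BT` on `r`
(targets `1,2,3,4`): every firing of the source produces a hit. -/
noncomputable def BTseq (r : ℕ → ℕ) : ℕ → ℕ :=
  fun t => if r t = 1 then (if r (countIn r t 1) = 1 then 1 else 2)
           else (if r (countIn r t 2) = 1 then 3 else 4)

/-- Two sequences are equivalent if one is obtained from the other by a relabelling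
that is injective on the values of the first (a bijective relabelling of states). -/
def SeqEquiv {α β : Type*} (f : ℕ → α) (g : ℕ → β) : Prop :=
  ∃ ρ : α → β, (∀ k, ρ (f k) = g k) ∧ ∀ k l, ρ (f k) = ρ (f l) → f k = f l

/-- Every aligned block of length `m` of `f` contains states `1` and `2` equally often
(`m = 2n` gives `2n`-balance). -/
def BalancedBlocks (f : ℕ → ℕ) (m : ℕ) : Prop :=
  ∀ k : ℕ, countIn (fun j => f (k * m + j)) m 1 = countIn (fun j => f (k * m + j)) m 2

/-- `f ≡_m g` : some relabelling of `f` (injective on states) has the same multiset of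
entries as `g` on every aligned block of length `m`. -/
def BlockEquiv (f g : ℕ → ℕ) (m : ℕ) : Prop :=
  ∃ ρ : ℕ → ℕ, (∀ k l, ρ (f k) = ρ (f l) ↔ f k = f l) ∧
    ∀ k : ℕ, (Multiset.range m).map (fun j => ρ (f (k * m + j))) =
             (Multiset.range m).map (fun j => g (k * m + j))

/-- `L` is a balanced run decomposition of one period (of length `p`) of `f`:
a list of positive run lengths summing to `p` such that each corresponding
consecutive run contains `1` and `2` equally often. -/
noncomputable def IsBRD (f : ℕ → ℕ) (p : ℕ) (L : List ℕ) : Prop :=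
  L.sum = p ∧ (∀ a ∈ L, 0 < a) ∧
  ∀ i : Fin L.length,
    countIn (fun j => f ((L.take i.1).sum + j)) (L.get i) 1 =
    countIn (fun j => f ((L.take i.1).sum + j)) (L.get i) 2

/-- `L` is a uniform run decomposition of one period (of length `p`) of `f`:
a list of positive run lengths summing to `p` such that each corresponding
consecutive run is constant. -/
def IsURD (f : ℕ → ℕ) (p : ℕ) (L : List ℕ) : Prop :=
  L.sum = p ∧ (∀ a ∈ L, 0 < a) ∧
  ∀ i : Fin L.length, ∀ j < L.get i, f ((L.take i.1).sum + j) = f ((L.take i.1).sum)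

/-- The maximal number of runs in a BRD of `f` (period `p`). -/
noncomputable def maxBRD (f : ℕ → ℕ) (p : ℕ) : ℕ :=
  sSup {m | ∃ L : List ℕ, IsBRD f p L ∧ L.length = m}

/-- The balance coefficient `b(f)` (with respect to period length `p`). -/
noncomputable def balCoeff (f : ℕ → ℕ) (p : ℕ) : ℚ := (maxBRD f p : ℚ) / (p : ℚ)

/-- The type of a run decomposition, as an infinite periodic sequence of run data. -/
def typeSeq (L : List ℕ) : ℕ → ℕ := fun i => L.getD (i % L.length) 0

/-- A BURD rotor: it has a BRD and a URD of the same type, i.e. the `i`-th balanced run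
has length `2·b_i` where `b_i` is the length of the `i`-th uniform run. -/
noncomputable def IsBURD (f : ℕ → ℕ) (p : ℕ) : Prop :=
  ∃ L M : List ℕ, IsBRD f p L ∧ IsURD f p M ∧ ∀ i, typeSeq L i = 2 * typeSeq M i

/-- The ba-frequency `m(f) = 2k/p` of an ab-ba sequence with period length `p`,
where `k` is the number of `21` blocks per period. -/
noncomputable def baFreq (f : ℕ → ℕ) (p : ℕ) : ℚ :=
  (2 * (((Finset.range (p / 2)).filter (fun j => f (2 * j) = 2)).card : ℚ)) / (p : ℚ)

/-! ### Rotor-router networks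

A rotor-router network on a vertex type `V`: a source, a finite set of targets
(outdegree 0), and at every non-target vertex `v` the rotor pattern, recorded by the
sequence `rotor v : ℕ → V` of heads of its successive out-edges.  The underlying digraph
has an edge `v → w` (for non-target `v`) iff `w` occurs in `v`'s rotor pattern. -/

structure RotorNetwork (V : Type) where
  source : V
  target : Finset V
  rotor : V → ℕ → V

namespace RotorNetwork

variable {V : Type} [DecidableEq V]

/-- One step of the particle dynamics on states `(current position, firing counts)`:
at a target, record it and restart at the source; at a non-target vertex `v`, fire the
next term of `v`'s rotor pattern. -/
noncomputable def step (N : RotorNetwork V) (s : V × (V → ℕ)) : V × (V → ℕ) :=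
  if s.1 ∈ N.target then (N.source, s.2)
  else (N.rotor s.1 (s.2 s.1), Function.update s.2 s.1 (s.2 s.1 + 1))

/-- The full trajectory of the particle, started at the source with all rotors fresh. -/
noncomputable def traj (N : RotorNetwork V) : ℕ → V × (V → ℕ)
  | 0 => (N.source, fun _ => 0)
  | t + 1 => N.step (N.traj t)

/-- The hitting sequence: the subsequence of targets visited, in order. -/
noncomputable def hitSeq (N : RotorNetwork V) : ℕ → V :=
  fun k => (N.traj (Nat.nth (fun t => (N.traj t).1 ∈ N.target) k)).1

/-- Adjacency of the underlying digraph. -/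
def adj (N : RotorNetwork V) (v w : V) : Prop :=
  v ∉ N.target ∧ ∃ k, N.rotor v k = w

/-- A valid rotor-router network: the source is not a target, there is at least one
target, and every non-target vertex can reach some target. -/
def Valid (N : RotorNetwork V) : Prop :=
  N.source ∉ N.target ∧ N.target.Nonempty ∧
  ∀ v : V, v ∉ N.target → ∃ t ∈ N.target, Relation.ReflTransGen N.adj v t

/-- The rotor pattern at `v` has type `r`: it is `e ∘ r` for some assignment `e` of
states to out-neighbours. -/
def HasType (N : RotorNetwork V) (v : V) (r : ℕ → ℕ) : Prop :=
  ∃ e : ℕ → V, ∀ k, N.rotor v k = e (r k)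

end RotorNetwork

/-- The alternating rotor type `1, 2, 1, 2, …` of period `2`. -/
def rot12 : ℕ → ℕ := fun k => if k % 2 = 0 then 1 else 2

/-- `r` is universal: every rotor type `r'` is, up to a bijective relabelling of states,
the hitting sequence of some finite rotor-router network all of whose rotors have type `r`. -/
noncomputable def Universal (r : ℕ → ℕ) : Prop :=
  ∀ (r' : ℕ → ℕ) (n' : ℕ), IsMinimalPeriod r' n' →
    ∃ (m : ℕ) (N : RotorNetwork (Fin m)), N.Valid ∧
      (∀ v, v ∉ N.target → N.HasType v r) ∧ SeqEquiv N.hitSeq r'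

/-- The (1-based) position of the `m`-th occurrence of the state `v` in `f`
(`posOf f 1 = f`, `posOf f 2 = g` in the paper's notation; `countIn f · 1 = F`,
`countIn f · 2 = G`). -/
noncomputable def posOf (f : ℕ → ℕ) (v m : ℕ) : ℕ := Nat.nth (fun k => f k = v) (m - 1) + 1


section S5Aux

private lemma count_shift (p : ℕ → Prop) [DecidablePred p] (T : ℕ)
    (h : ∀ t, p (t + T) ↔ p t) :
    ∀ t, Nat.count p (t + T) = Nat.count p t + Nat.count p T := by
  intro t
  induction t with
  | zero => simp
  | succ t ih =>
    have e : t + 1 + T = (t + T) + 1 := by omega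
    rw [e, Nat.count_succ, ih, Nat.count_succ]
    by_cases hp : p t
    · rw [if_pos hp, if_pos ((h t).mpr hp)]; omega
    · rw [if_neg hp, if_neg (fun hh => hp ((h t).mp hh))]; omega

private lemma count_shift_mul (p : ℕ → Prop) [DecidablePred p] (n : ℕ)
    (h : ∀ t, p (t + n) ↔ p t) (m j : ℕ) :
    Nat.count p (m + j * n) = Nat.count p m + j * Nat.count p n := by
  induction j with
  | zero => simp
  | succ j ih =>
    have e : m + (j + 1) * n = (m + j * n) + n := by ring
    rw [e, count_shift p n h, ih]; ring

private lemma nth_shift (p : ℕ → Prop) [DecidablePred p] (T : ℕ)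
    (h : ∀ t, p (t + T) ↔ p t) (hinf : (setOf p).Infinite) (k : ℕ) :
    Nat.nth p (k + Nat.count p T) = Nat.nth p k + T := by
  have ha : p (Nat.nth p k) := Nat.nth_mem_of_infinite hinf k
  have h2 : p (Nat.nth p k + T) := (h _).mpr ha
  have h3 : Nat.count p (Nat.nth p k + T) = k + Nat.count p T := by
    rw [count_shift p T h, Nat.count_nth_of_infinite hinf]
  calc Nat.nth p (k + Nat.count p T)
      = Nat.nth p (Nat.count p (Nat.nth p k + T)) := by rw [h3]
    _ = Nat.nth p k + T := Nat.nth_count h2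

private lemma chain'_restrict {α : Type*} {r : α → α → Prop} {P : α → Prop} :
    ∀ l : List α, l.Chain' r → (∀ x ∈ l, P x) →
      l.Chain' (fun x y => r x y ∧ P x ∧ P y)
  | [] => fun _ _ => List.IsChain.nil
  | [a] => fun _ _ => List.IsChain.singleton _
  | a :: b :: l => fun hc hP => by
    simp only [List.Chain', List.isChain_cons_cons] at hc ⊢
    exact ⟨⟨hc.1, hP a (by simp), hP b (by simp)⟩,
      chain'_restrict (b :: l) hc.2 (fun x hx => hP x (List.mem_cons_of_mem _ hx))⟩

private lemma chain'_reflTransGen_last {α : Type*} {r : α → α → Prop} :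
    ∀ (l : List α), l.Chain' r → ∀ (v u : α), v ∈ l → l.getLast? = some u →
      Relation.ReflTransGen r v u
  | [] => fun _ v u hv _ => absurd hv List.not_mem_nil
  | [a] => fun _ v u hv hu => by
      simp only [List.mem_singleton] at hv
      simp only [List.getLast?_singleton, Option.some.injEq] at hu
      subst hv; subst hu; exact Relation.ReflTransGen.refl
  | a :: b :: l => fun hc v u hv hu => by
      simp only [List.Chain', List.isChain_cons_cons] at hc
      have hu' : (b :: l).getLast? = some u := by
        rw [List.getLast?_cons_cons] at hu; exact hu
      rcases List.mem_cons.mp hv with rfl | hv'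
      · exact Relation.ReflTransGen.head hc.1
          (chain'_reflTransGen_last (b :: l) hc.2 b u (by simp) hu')
      · exact chain'_reflTransGen_last (b :: l) hc.2 v u hv' hu'

private lemma abstractKey {V : Type*} [DecidableEq V] (U : Finset V) (s : V)
    (n : ℕ) (Nf : V → ℕ → ℕ) (φ : V → V → ℕ → ℕ) (c : V → V → ℕ)
    (dep : V → ℕ)
    (hφ : ∀ u ∈ U, ∀ v (m j : ℕ), φ u v (m + j * n) = φ u v m + j * c u v)
    (hNs : ∀ k, Nf s k = k)
    (hNv : ∀ v ∈ U, v ≠ s → ∀ k, Nf v k = ∑ u ∈ U, φ u v (Nf u k))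
    (hdeps : dep s = 1)
    (hdep2 : ∀ v ∈ U, v ≠ s → 2 ≤ dep v)
    (hedge : ∀ v ∈ U, v ≠ s → ∀ u ∈ U, dep u < dep v ∨ ∀ m, φ u v m = 0) :
    ∀ i, ∀ v ∈ U, dep v ≤ i →
      ∃ D : ℕ → ℕ, ∀ k, Nf v (k + n ^ i) = Nf v k + n * D (k % n ^ i) := by
  -- iterating a period statement over j blocks
  have blocks : ∀ (i : ℕ) (v : V) (D : ℕ → ℕ),
      (∀ k, Nf v (k + n ^ i) = Nf v k + n * D (k % n ^ i)) →
      ∀ (j k : ℕ), Nf v (k + j * n ^ i) = Nf v k + j * (n * D (k % n ^ i)) := by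
    intro i v D hD j
    induction j with
    | zero => intro k; simp
    | succ j ih =>
      intro k
      have e : k + (j + 1) * n ^ i = (k + j * n ^ i) + n ^ i := by ring
      rw [e, hD, ih k, Nat.add_mul_mod_self_right]
      ring
  have bump : ∀ (i : ℕ) (v : V),
      (∃ D : ℕ → ℕ, ∀ k, Nf v (k + n ^ i) = Nf v k + n * D (k % n ^ i)) →
      ∃ D : ℕ → ℕ, ∀ k, Nf v (k + n ^ (i + 1)) = Nf v k + n * D (k % n ^ (i + 1)) := by
    rintro i v ⟨D, hD⟩
    refine ⟨fun m => n * D (m % n ^ i), fun k => ?_⟩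
    have e : k + n ^ (i + 1) = k + n * n ^ i := by rw [pow_succ']
    rw [e, blocks i v D hD n k]
    simp only [Nat.mod_mod_of_dvd k (pow_dvd_pow n (Nat.le_succ i))]
  intro i
  induction i with
  | zero =>
    intro v hv h0
    exfalso
    by_cases hvs : v = s
    · subst hvs; omega
    · have := hdep2 v hv hvs; omega
  | succ i ih =>
    intro v hv hle
    by_cases hdle : dep v ≤ i
    · exact bump i v (ih v hv hdle)
    by_cases hvs : v = s
    · subst hvs
      have hi0 : i = 0 := by omega
      subst hi0
      refine ⟨fun _ => 1, fun k => ?_⟩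
      simp [hNs, pow_one, Nat.mul_one]
    · -- main step
      have hu : ∀ u : V, ∃ Du : ℕ → ℕ, u ∈ U → ∀ k,
          φ u v (Nf u (k + n ^ (i + 1))) = φ u v (Nf u k) + n * Du (k % n ^ (i + 1)) := by
        intro u
        by_cases huU : u ∈ U
        · rcases hedge v hv hvs u huU with hlt | hzero
          · have hui : dep u ≤ i := by omega
            obtain ⟨D, hD⟩ := ih u huU hui
            refine ⟨fun m => D (m % n ^ i) * c u v, fun _ k => ?_⟩
            have e : k + n ^ (i + 1) = k + n * n ^ i := by rw [pow_succ']
            have h1 : Nf u (k + n ^ (i + 1)) = Nf u k + (n * D (k % n ^ i)) * n := by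
              rw [e, blocks i u D hD n k]; ring
            rw [h1, hφ u huU v (Nf u k) (n * D (k % n ^ i))]
            simp only [Nat.mod_mod_of_dvd k (pow_dvd_pow n (Nat.le_succ i))]
            ring
          · exact ⟨fun _ => 0, fun _ k => by simp [hzero]⟩
        · exact ⟨fun _ => 0, fun h => absurd h huU⟩
      choose Du hDu using hu
      refine ⟨fun m => ∑ u ∈ U, Du u m, fun k => ?_⟩
      rw [hNv v hv hvs (k + n ^ (i + 1)), hNv v hv hvs k, Finset.mul_sum,
        ← Finset.sum_add_distrib]
      exact Finset.sum_congr rfl fun u huU => hDu u huU k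

end S5Aux

section S5Main

variable {V : Type} [Fintype V] [DecidableEq V]

private noncomputable def phiC (N : RotorNetwork V) (u v : V) (m : ℕ) : ℕ :=
  Nat.count (fun j => N.rotor u j = v) m

private def pathSet (N : RotorNetwork V) (v : V) : Set ℕ :=
  {m | ∃ l : List V, l.head? = some N.source ∧ l.Chain' N.adj ∧ l.Nodup ∧
        l.getLast? = some v ∧ (l.filter (fun x => decide (x ∉ N.target))).length = m}

private noncomputable def depN (N : RotorNetwork V) (v : V) : ℕ := sSup (pathSet N v)

end S5Main


/-- In a homogeneous rotor-router network of type `r` in which every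
directed cycle contains the source, if `d` bounds the number of non-target vertices on
any simple directed path starting at the source, then the hitting sequence has a period
of length at most `|r|^d`. -/
theorem statement5 {V : Type} [Fintype V] [DecidableEq V] (N : RotorNetwork V)
    (hvalid : N.Valid) (r : ℕ → ℕ) (n : ℕ) (hmin : IsMinimalPeriod r n)
    (htype : ∀ v, v ∉ N.target → N.HasType v r)
    (hcyc : ∀ v : V,
      ¬ Relation.TransGen (fun a b => N.adj a b ∧ a ≠ N.source ∧ b ≠ N.source) v v)
    (d : ℕ)
    (hd : ∀ l : List V, l.head? = some N.source → l.Chain' N.adj → l.Nodup →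
      (l.filter (fun v => decide (v ∉ N.target))).length ≤ d) :
    ∃ p : ℕ, 0 < p ∧ p ≤ n ^ d ∧ IsPeriodicWith N.hitSeq p := by
  obtain ⟨hsnt, htne, hreachT⟩ := hvalid
  obtain ⟨hn, hper, _⟩ := hmin
  -- rotor periodicity
  have hrot : ∀ v, v ∉ N.target → ∀ m, N.rotor v (m + n) = N.rotor v m := by
    intro v hv m
    obtain ⟨e, he⟩ := htype v hv
    rw [he, he, hper]
  have hrot_mod : ∀ v, v ∉ N.target → ∀ a b, a % n = b % n → N.rotor v a = N.rotor v b := by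
    intro v hv
    have key : ∀ q rr, N.rotor v (rr + n * q) = N.rotor v rr := by
      intro q
      induction q with
      | zero => simp
      | succ q ih =>
        intro rr
        have e : rr + n * (q + 1) = (rr + n * q) + n := by ring
        rw [e, hrot v hv, ih]
    intro a b hab
    have ha : a % n + n * (a / n) = a := Nat.mod_add_div a n
    have hb : b % n + n * (b / n) = b := Nat.mod_add_div b n
    rw [← ha, ← hb, key, key, hab]
  -- basic trajectory lemmas
  have traj0 : N.traj 0 = (N.source, fun _ => 0) := rfl
  have stepT : ∀ t, (N.traj t).1 ∈ N.target → N.traj (t + 1) = (N.source, (N.traj t).2) := by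
    intro t h
    show N.step (N.traj t) = _
    unfold RotorNetwork.step
    rw [if_pos h]
  have stepN : ∀ t, (N.traj t).1 ∉ N.target → N.traj (t + 1) =
      (N.rotor (N.traj t).1 ((N.traj t).2 (N.traj t).1),
       Function.update (N.traj t).2 (N.traj t).1 ((N.traj t).2 (N.traj t).1 + 1)) := by
    intro t h
    show N.step (N.traj t) = _
    unfold RotorNetwork.step
    rw [if_neg h]
  have hreach : ∀ t, Relation.ReflTransGen N.adj N.source (N.traj t).1 := by
    intro t
    induction t with
    | zero => exact .refl
    | succ t ih =>
      by_cases h : (N.traj t).1 ∈ N.target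
      · rw [stepT t h]
      · rw [stepN t h]; exact ih.tail ⟨h, _, rfl⟩
  have cnt_target : ∀ t v, v ∈ N.target → (N.traj t).2 v = 0 := by
    intro t
    induction t with
    | zero => intro v _; rfl
    | succ t ih =>
      intro v hv
      by_cases h : (N.traj t).1 ∈ N.target
      · rw [stepT t h]; exact ih v hv
      · rw [stepN t h]
        simp only
        rw [Function.update_apply, if_neg (by rintro rfl; exact h hv)]
        exact ih v hv
  have cnt_unreach : ∀ v, ¬ Relation.ReflTransGen N.adj N.source v →
      ∀ t, (N.traj t).2 v = 0 := by
    intro v hv t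
    induction t with
    | zero => rfl
    | succ t ih =>
      by_cases h : (N.traj t).1 ∈ N.target
      · rw [stepT t h]; exact ih
      · rw [stepN t h]
        simp only
        rw [Function.update_apply, if_neg (by rintro rfl; exact hv (hreach t))]
        exact ih
  -- clean times
  have hClean0 : (N.traj 0).1 = N.source := rfl
  have cnt_src : ∀ t, (N.traj t).2 N.source
      = Nat.count (fun t => (N.traj t).1 = N.source) t := by
    intro t
    induction t with
    | zero => rw [Nat.count_zero]; rfl
    | succ t ih =>
      rw [Nat.count_succ]
      by_cases h : (N.traj t).1 ∈ N.target
      · rw [stepT t h]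
        simp only
        rw [ih, if_neg (by intro hc; exact hsnt (hc ▸ h))]
        omega
      · rw [stepN t h]
        simp only
        rw [Function.update_apply]
        by_cases hc : (N.traj t).1 = N.source
        · rw [if_pos hc.symm, if_pos hc, hc, ih]
        · rw [if_neg (fun e => hc e.symm), if_neg hc, ih]
          omega
  -- conservation law
  have cons : ∀ t v, v ∉ N.target → v ≠ N.source →
      (N.traj t).2 v + (if (N.traj t).1 = v then 1 else 0)
        = ∑ u ∈ Finset.univ.filter (fun u => u ∉ N.target), phiC N u v ((N.traj t).2 u) := by
    intro t
    induction t with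
    | zero =>
      intro v hv hvS
      rw [traj0]
      simp only
      rw [if_neg (fun e => hvS e.symm)]
      simp [phiC]
    | succ t ih =>
      intro v hv hvS
      by_cases h : (N.traj t).1 ∈ N.target
      · rw [stepT t h]
        simp only
        rw [if_neg (fun e => hvS e.symm)]
        have := ih v hv hvS
        rw [if_neg (show ¬(N.traj t).1 = v by rintro rfl; exact hv h)] at this
        omega
      · rw [stepN t h]
        simp only
        have hwU : (N.traj t).1 ∈ Finset.univ.filter (fun u => u ∉ N.target) := by
          simp [h]
        have hsum : ∀ g : V → ℕ,
            ∑ u ∈ Finset.univ.filter (fun u => u ∉ N.target), phiC N u v (g u)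
              = ∑ u ∈ (Finset.univ.filter (fun u => u ∉ N.target)).erase (N.traj t).1,
                  phiC N u v (g u) + phiC N (N.traj t).1 v (g (N.traj t).1) :=
          fun g => (Finset.sum_erase_add _ _ hwU).symm
        rw [hsum (Function.update (N.traj t).2 (N.traj t).1 ((N.traj t).2 (N.traj t).1 + 1))]
        have herase : ∀ u ∈ (Finset.univ.filter (fun u => u ∉ N.target)).erase (N.traj t).1,
            phiC N u v (Function.update (N.traj t).2 (N.traj t).1
              ((N.traj t).2 (N.traj t).1 + 1) u) = phiC N u v ((N.traj t).2 u) := by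
          intro u hu
          rw [Function.update_apply, if_neg (Finset.ne_of_mem_erase hu)]
        rw [Finset.sum_congr rfl herase]
        rw [Function.update_self]
        have hφsucc : phiC N (N.traj t).1 v ((N.traj t).2 (N.traj t).1 + 1)
            = phiC N (N.traj t).1 v ((N.traj t).2 (N.traj t).1)
              + (if N.rotor (N.traj t).1 ((N.traj t).2 (N.traj t).1) = v then 1 else 0) := by
          unfold phiC
          rw [Nat.count_succ]
        rw [hφsucc]
        have hLHS := ih v hv hvS
        rw [hsum ((N.traj t).2)] at hLHS
        rw [Function.update_apply]
        by_cases hvw : v = (N.traj t).1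
        · subst hvw
          rw [if_pos rfl]
          rw [if_pos rfl] at hLHS
          by_cases hr : N.rotor (N.traj t).1 ((N.traj t).2 (N.traj t).1) = (N.traj t).1
          · rw [if_pos hr]; omega
          · rw [if_neg hr]; omega
        · rw [if_neg hvw]
          rw [if_neg (fun e => hvw e.symm)] at hLHS
          by_cases hr : N.rotor (N.traj t).1 ((N.traj t).2 (N.traj t).1) = v
          · rw [if_pos hr]; omega
          · rw [if_neg hr]; omega
  -- infinitude of clean times
  have hCleanInf : (setOf (fun t => (N.traj t).1 = N.source)).Infinite := by
    by_contra hfin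
    rw [Set.not_infinite] at hfin
    obtain ⟨b, hb⟩ := hfin.bddAbove
    have h1 : ∀ t, b < t → (N.traj t).1 ≠ N.source := by
      intro t ht hc
      exact absurd (hb hc) (by omega)
    have h2 : ∀ t, b < t → (N.traj t).1 ∉ N.target := by
      intro t ht hmem
      have hc1 : (N.traj (t + 1)).1 = N.source := by rw [stepT t hmem]
      exact h1 (t + 1) (by omega) hc1
    have hstep : ∀ t, b < t →
        (N.adj (N.traj t).1 (N.traj (t + 1)).1 ∧ (N.traj t).1 ≠ N.source ∧
          (N.traj (t + 1)).1 ≠ N.source) := by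
      intro t ht
      refine ⟨?_, h1 t ht, h1 (t + 1) (by omega)⟩
      rw [stepN t (h2 t ht)]
      exact ⟨h2 t ht, _, rfl⟩
    have htg : ∀ m t, b < t → Relation.TransGen
        (fun a c => N.adj a c ∧ a ≠ N.source ∧ c ≠ N.source)
        (N.traj t).1 (N.traj (t + m + 1)).1 := by
      intro m
      induction m with
      | zero => intro t ht; exact Relation.TransGen.single (hstep t ht)
      | succ m ih =>
        intro t ht
        have e : t + (m + 1) + 1 = (t + m + 1) + 1 := by omega
        rw [e]
        exact Relation.TransGen.tail (ih t ht) (hstep (t + m + 1) (by omega))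
    have key : ∀ i j : ℕ, i < j → (N.traj (b + 1 + i)).1 = (N.traj (b + 1 + j)).1 → False := by
      intro i j hlt heq
      have e : b + 1 + j = (b + 1 + i) + (j - i - 1) + 1 := by omega
      have h3 := htg (j - i - 1) (b + 1 + i) (by omega)
      rw [← e] at h3
      rw [heq] at h3
      exact hcyc _ h3
    obtain ⟨i, j, hij, he⟩ :=
      Finite.exists_ne_map_eq_of_infinite (fun i : ℕ => (N.traj (b + 1 + i)).1)
    rcases hij.lt_or_gt with hlt | hlt
    · exact key i j hlt he
    · exact key j i hlt he.symm
  have hτmem : ∀ k, (N.traj (Nat.nth (fun t => (N.traj t).1 = N.source) k)).1 = N.source :=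
    fun k => Nat.nth_mem_of_infinite hCleanInf k
  have hτcount : ∀ k, Nat.count (fun t => (N.traj t).1 = N.source)
      (Nat.nth (fun t => (N.traj t).1 = N.source) k) = k :=
    fun k => Nat.count_nth_of_infinite hCleanInf k
  have hτ0 : Nat.nth (fun t => (N.traj t).1 = N.source) 0 = 0 :=
    Nat.nth_zero_of_zero hClean0
  -- depth machinery
  have hPS_le : ∀ v m, m ∈ pathSet N v → m ≤ d := by
    rintro v m ⟨l, h1, h2, h3, h4, rfl⟩
    exact hd l h1 h2 h3
  have hbdd : ∀ v, BddAbove (pathSet N v) := fun v => ⟨d, fun m hm => hPS_le v m hm⟩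
  have hmem_le : ∀ v m, m ∈ pathSet N v → m ≤ depN N v :=
    fun v m hm => le_csSup (hbdd v) hm
  have hPS_S : (1 : ℕ) ∈ pathSet N N.source := by
    refine ⟨[N.source], by simp, List.IsChain.singleton _, by simp, by simp, ?_⟩
    simp [hsnt]
  have hattain : ∀ v, (pathSet N v).Nonempty → depN N v ∈ pathSet N v :=
    fun v hne => Nat.sSup_mem hne (hbdd v)
  have hdep_le_d : ∀ v, depN N v ≤ d := by
    intro v
    by_cases hne : (pathSet N v).Nonempty
    · exact hPS_le v _ (hattain v hne)
    · have hE : pathSet N v = ∅ := Set.not_nonempty_iff_eq_empty.mp hne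
      unfold depN
      rw [hE, csSup_empty]
      exact bot_le
  have hdepS : depN N N.source = 1 := by
    have h1 : ∀ m ∈ pathSet N N.source, m = 1 := by
      rintro m ⟨l, hh, hc, hnd, hl, rfl⟩
      cases l with
      | nil => simp at hh
      | cons a t =>
        have ha : a = N.source := by simpa using hh
        subst ha
        cases t with
        | nil => simp [hsnt]
        | cons b t' =>
          exfalso
          rw [List.getLast?_cons_cons] at hl
          obtain ⟨hne', he'⟩ :=
            List.mem_getLast?_eq_getLast (show N.source ∈ (b :: t').getLast? from hl)
          have hmem : N.source ∈ b :: t' := he' ▸ List.getLast_mem hne'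
          exact (List.nodup_cons.mp hnd).1 hmem
    exact h1 _ (hattain _ ⟨1, hPS_S⟩)
  have hdep2' : ∀ v m, v ≠ N.source → v ∉ N.target → m ∈ pathSet N v → 2 ≤ m := by
    rintro v m hvS hvT ⟨l, hh, hc, hnd, hl, rfl⟩
    have hSl : N.source ∈ l := by
      cases l with
      | nil => simp at hh
      | cons a t =>
        have ha : a = N.source := by simpa using hh
        subst ha
        exact List.mem_cons_self
    obtain ⟨hne', he'⟩ := List.mem_getLast?_eq_getLast (show v ∈ l.getLast? from hl)
    have hvl : v ∈ l := he' ▸ List.getLast_mem hne'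
    have hSf : N.source ∈ l.filter (fun x => decide (x ∉ N.target)) :=
      List.mem_filter.mpr ⟨hSl, by simp [hsnt]⟩
    have hvf : v ∈ l.filter (fun x => decide (x ∉ N.target)) :=
      List.mem_filter.mpr ⟨hvl, by simp [hvT]⟩
    rcases hfl : l.filter (fun x => decide (x ∉ N.target)) with _ | ⟨x, _ | ⟨y, rest⟩⟩
    · rw [hfl] at hSf
      exact absurd hSf List.not_mem_nil
    · rw [hfl] at hSf hvf
      have hx1 : N.source = x := by simpa using hSf
      have hx2 : v = x := by simpa using hvf
      exact absurd (hx2.trans hx1.symm) hvS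
    · simp only [List.length_cons]
      omega
  -- path extraction from reachability
  have hPS_ne : ∀ v, Relation.ReflTransGen N.adj N.source v → (pathSet N v).Nonempty := by
    intro v hv
    induction hv with
    | refl => exact ⟨1, hPS_S⟩
    | @tail b c hab hbc ih =>
      obtain ⟨m, l, hh, hc, hnd, hl, hm⟩ := ih
      by_cases hcl : c ∈ l
      · obtain ⟨l1, l2, rfl⟩ := List.append_of_mem hcl
        refine ⟨_, l1 ++ [c], ?_, ?_, ?_, List.getLast?_concat, rfl⟩
        · cases l1 with
          | nil => simpa using hh
          | cons a t => simpa using hh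
        · exact hc.prefix ⟨l2, by simp⟩
        · exact List.Nodup.sublist (List.IsPrefix.sublist ⟨l2, by simp⟩) hnd
      · refine ⟨_, l ++ [c], ?_, ?_, ?_, List.getLast?_concat, rfl⟩
        · have hlne : l ≠ [] := by rintro rfl; simp at hh
          rw [List.head?_append_of_ne_nil _ hlne]
          exact hh
        · simp only [List.Chain', List.isChain_append]
          refine ⟨hc, List.isChain_singleton c, ?_⟩
          intro x hx y hy
          rw [hl] at hx
          simp only [Option.mem_def, Option.some.injEq] at hx
          simp only [List.head?_cons, Option.mem_def, Option.some.injEq] at hy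
          subst hx; subst hy
          exact hbc
        · rw [List.nodup_append]
          refine ⟨hnd, by simp, ?_⟩
          intro a ha b hb
          rw [List.mem_singleton] at hb
          subst hb
          rintro rfl; exact hcl ha
  -- edge bump for the depth
  have hbump : ∀ u v, Relation.ReflTransGen N.adj N.source u → N.adj u v →
      v ≠ N.source → v ∉ N.target → depN N u < depN N v := by
    intro u v hru hadj hvS hvT
    by_cases huS : u = N.source
    · subst huS
      have h2 : (2 : ℕ) ∈ pathSet N v := by
        refine ⟨[N.source, v], by simp, ?_, ?_, by simp, ?_⟩
        · exact List.isChain_pair.mpr hadj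
        · simp [List.nodup_cons]
          exact fun e => hvS e.symm
        · simp [hsnt, hvT]
      have := hmem_le v 2 h2
      rw [hdepS]
      omega
    · obtain ⟨l, hh, hc, hnd, hl, hm⟩ := hattain u (hPS_ne u hru)
      by_cases hvl : v ∈ l
      · exfalso
        cases l with
        | nil => simp at hh
        | cons a t =>
          have ha : a = N.source := by simpa using hh
          subst ha
          have hvt : v ∈ t := by
            rcases List.mem_cons.mp hvl with h' | h'
            · exact absurd h' hvS
            · exact h'
          have hSnt : N.source ∉ t := (List.nodup_cons.mp hnd).1
          cases t with
          | nil => simp at hvt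
          | cons b t' =>
            rw [List.getLast?_cons_cons] at hl
            have hres : (b :: t').Chain' (fun x y =>
                N.adj x y ∧ x ≠ N.source ∧ y ≠ N.source) :=
              chain'_restrict _ ((List.isChain_cons_cons.mp hc).2)
                (fun x hx => by rintro rfl; exact hSnt hx)
            have hrt := chain'_reflTransGen_last _ hres v u hvt hl
            exact hcyc v (Relation.TransGen.tail' hrt ⟨hadj, huS, hvS⟩)
      · have hnew : depN N u + 1 ∈ pathSet N v := by
          refine ⟨l ++ [v], ?_, ?_, ?_, List.getLast?_concat, ?_⟩
          · have hlne : l ≠ [] := by rintro rfl; simp at hh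
            rw [List.head?_append_of_ne_nil _ hlne]
            exact hh
          · simp only [List.Chain', List.isChain_append]
            refine ⟨hc, List.isChain_singleton v, ?_⟩
            intro x hx y hy
            rw [hl] at hx
            simp only [Option.mem_def, Option.some.injEq] at hx
            simp only [List.head?_cons, Option.mem_def, Option.some.injEq] at hy
            subst hx; subst hy
            exact hadj
          · rw [List.nodup_append]
            refine ⟨hnd, by simp, ?_⟩
            intro a ha b hb
            rw [List.mem_singleton] at hb
            subst hb
            rintro rfl; exact hvl ha
          · rw [List.filter_append, List.length_append, hm]
            simp [hvT]
        have := hmem_le v _ hnew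
        omega
  -- apply the abstract modular lemma
  classical
  set U : Finset V := Finset.univ.filter
    (fun v => v ∉ N.target ∧ Relation.ReflTransGen N.adj N.source v) with hU
  have hSU : N.source ∈ U :=
    Finset.mem_filter.mpr ⟨Finset.mem_univ _, hsnt, Relation.ReflTransGen.refl⟩
  have hmemU : ∀ v, v ∈ U ↔ (v ∉ N.target ∧ Relation.ReflTransGen N.adj N.source v) := by
    intro v
    rw [hU]
    simp
  have hφ' : ∀ u ∈ U, ∀ (v : V) (m j : ℕ),
      phiC N u v (m + j * n) = phiC N u v m + j * phiC N u v n := by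
    intro u hu v m j
    have huT : u ∉ N.target := ((hmemU u).mp hu).1
    simpa [phiC] using
      count_shift_mul (fun j => N.rotor u j = v) n
        (fun t => by show N.rotor u (t + n) = v ↔ N.rotor u t = v; rw [hrot u huT t]) m j
  have hNs' : ∀ k, (N.traj (Nat.nth (fun t => (N.traj t).1 = N.source) k)).2 N.source = k := by
    intro k
    rw [cnt_src]
    exact hτcount k
  have hNv' : ∀ v ∈ U, v ≠ N.source → ∀ k,
      (N.traj (Nat.nth (fun t => (N.traj t).1 = N.source) k)).2 v
        = ∑ u ∈ U, phiC N u v ((N.traj (Nat.nth (fun t => (N.traj t).1 = N.source) k)).2 u) := by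
    intro v hv hvS k
    have hvT : v ∉ N.target := ((hmemU v).mp hv).1
    have hcons := cons (Nat.nth (fun t => (N.traj t).1 = N.source) k) v hvT hvS
    rw [if_neg (fun e => hvS (e.symm.trans (hτmem k)))] at hcons
    have hsub : ∑ u ∈ U, phiC N u v
          ((N.traj (Nat.nth (fun t => (N.traj t).1 = N.source) k)).2 u)
        = ∑ u ∈ Finset.univ.filter (fun u => u ∉ N.target), phiC N u v
          ((N.traj (Nat.nth (fun t => (N.traj t).1 = N.source) k)).2 u) := by
      apply Finset.sum_subset
      · intro x hx
        simp only [Finset.mem_filter, Finset.mem_univ, true_and]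
        exact ((hmemU x).mp hx).1
      · intro x hx hxU
        have hxT : x ∉ N.target := by
          simp only [Finset.mem_filter, Finset.mem_univ, true_and] at hx
          exact hx
        have hxr : ¬ Relation.ReflTransGen N.adj N.source x := by
          intro hr
          exact hxU ((hmemU x).mpr ⟨hxT, hr⟩)
        rw [cnt_unreach x hxr]
        simp [phiC]
    rw [hsub]
    omega
  have hdep2'' : ∀ v ∈ U, v ≠ N.source → 2 ≤ depN N v := by
    intro v hv hvS
    obtain ⟨hvT, hvr⟩ := (hmemU v).mp hv
    exact hdep2' v _ hvS hvT (hattain v (hPS_ne v hvr))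
  have hedge' : ∀ v ∈ U, v ≠ N.source → ∀ u ∈ U,
      depN N u < depN N v ∨ ∀ m, phiC N u v m = 0 := by
    intro v hv hvS u hu
    obtain ⟨hvT, hvr⟩ := (hmemU v).mp hv
    obtain ⟨huT, hur⟩ := (hmemU u).mp hu
    by_cases hex : ∃ j, N.rotor u j = v
    · left
      exact hbump u v hur ⟨huT, hex⟩ hvS hvT
    · right
      intro m
      have hz : ∀ m, Nat.count (fun j => N.rotor u j = v) m = 0 := by
        intro m
        induction m with
        | zero => exact Nat.count_zero _
        | succ m ih => rw [Nat.count_succ, ih, if_neg (fun he => hex ⟨m, he⟩)]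
      simpa [phiC] using hz m
  have hkey := abstractKey U N.source n
    (fun v k => (N.traj (Nat.nth (fun t => (N.traj t).1 = N.source) k)).2 v)
    (fun u v m => phiC N u v m) (fun u v => phiC N u v n) (depN N)
    hφ' hNs' hNv' hdepS hdep2'' hedge' d
  -- the grand period of positions/counts
  set T := Nat.nth (fun t => (N.traj t).1 = N.source) (n ^ d) with hT
  have hcntT : ∀ v, (N.traj T).2 v % n = 0 := by
    intro v
    by_cases hvT : v ∈ N.target
    · rw [cnt_target T v hvT, Nat.zero_mod]
    by_cases hvr : Relation.ReflTransGen N.adj N.source v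
    · have hvU : v ∈ U := (hmemU v).mpr ⟨hvT, hvr⟩
      obtain ⟨D, hD⟩ := hkey v hvU (hdep_le_d v)
      have hD0 := hD 0
      rw [zero_add] at hD0
      have h0 : (N.traj (Nat.nth (fun t => (N.traj t).1 = N.source) 0)).2 v = 0 := by
        rw [hτ0]
        rfl
      rw [h0, zero_add] at hD0
      rw [hT, hD0]
      exact Nat.mul_mod_right n _
    · rw [cnt_unreach v hvr T, Nat.zero_mod]
  have hposT : (N.traj T).1 = N.source := hτmem _
  have hT0 : 0 < T := by
    have h01 : Nat.nth (fun t => (N.traj t).1 = N.source) 0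
        < Nat.nth (fun t => (N.traj t).1 = N.source) (n ^ d) :=
      (Nat.nth_lt_nth hCleanInf).mpr (pow_pos hn d)
    rw [hτ0] at h01
    exact h01
  -- the invariant
  have hinv : ∀ t, (N.traj (t + T)).1 = (N.traj t).1 ∧
      ∀ v, (N.traj (t + T)).2 v % n = (N.traj t).2 v % n := by
    intro t
    induction t with
    | zero =>
      constructor
      · rw [zero_add, hposT]
        exact hClean0.symm
      · intro v
        rw [zero_add, hcntT v]
        simp [traj0]
    | succ t ih =>
      obtain ⟨hp, hcnt⟩ := ih
      have e : t + 1 + T = (t + T) + 1 := by omega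
      by_cases h : (N.traj t).1 ∈ N.target
      · have h' : (N.traj (t + T)).1 ∈ N.target := by rw [hp]; exact h
        rw [e, stepT _ h', stepT t h]
        exact ⟨rfl, hcnt⟩
      · have h' : (N.traj (t + T)).1 ∉ N.target := by rw [hp]; exact h
        rw [e, stepN _ h', stepN t h]
        constructor
        · simp only
          rw [hp]
          exact hrot_mod _ h _ _ (hcnt _)
        · intro v
          simp only [Function.update_apply]
          rw [hp]
          by_cases hv : v = (N.traj t).1
          · rw [if_pos hv, if_pos hv]
            exact Nat.ModEq.add_right 1 (hcnt (N.traj t).1)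
          · rw [if_neg hv, if_neg hv]
            exact hcnt v
  -- conclusion
  have hHshift : ∀ t, ((N.traj (t + T)).1 ∈ N.target) ↔ ((N.traj t).1 ∈ N.target) := by
    intro t
    rw [(hinv t).1]
  by_cases hp0 : Nat.count (fun t => (N.traj t).1 ∈ N.target) T = 0
  · -- no hits ever: the hitting sequence is constant
    have hsmall : ∀ t, t < T → (N.traj t).1 ∉ N.target := by
      intro t ht hmem
      have h1 : Nat.count (fun t => (N.traj t).1 ∈ N.target) (t + 1)
          = Nat.count (fun t => (N.traj t).1 ∈ N.target) t + 1 := by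
        rw [Nat.count_succ, if_pos hmem]
      have h2 : Nat.count (fun t => (N.traj t).1 ∈ N.target) (t + 1) ≤
          Nat.count (fun t => (N.traj t).1 ∈ N.target) T :=
        Nat.count_monotone _ (by omega)
      omega
    have hnone : ∀ t, (N.traj t).1 ∉ N.target := by
      intro t
      induction t using Nat.strong_induction_on with
      | _ t ih =>
        by_cases hlt : t < T
        · exact hsmall t hlt
        · have e : t = (t - T) + T := by omega
          rw [e, hHshift]
          exact ih (t - T) (by omega)
    refine ⟨1, by omega, Nat.one_le_pow d n hn, ?_⟩
    intro k
    unfold RotorNetwork.hitSeq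
    rw [Nat.nth_of_forall_not (fun m _ => hnone m),
        Nat.nth_of_forall_not (fun m _ => hnone m)]
  · -- positive hit count
    have hppos : 0 < Nat.count (fun t => (N.traj t).1 ∈ N.target) T :=
      Nat.pos_of_ne_zero hp0
    -- bound the number of hits before `T`
    have hple : Nat.count (fun t => (N.traj t).1 ∈ N.target) T ≤ n ^ d := by
      rw [Nat.count_eq_card_filter_range]
      have hcT : Nat.count (fun t => (N.traj t).1 = N.source) T = n ^ d := by
        rw [hT]
        exact hτcount _
      have hclean1 : ∀ t, (N.traj t).1 ∈ N.target → (N.traj (t + 1)).1 = N.source := by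
        intro t ht
        rw [stepT t ht]
      have hmaps : ∀ t ∈ (Finset.range T).filter (fun t => (N.traj t).1 ∈ N.target),
          Nat.count (fun t => (N.traj t).1 = N.source) (t + 1) ∈ Finset.Icc 1 (n ^ d) := by
        intro t ht
        simp only [Finset.mem_filter, Finset.mem_range] at ht
        obtain ⟨htT, htH⟩ := ht
        refine Finset.mem_Icc.mpr ⟨?_, ?_⟩
        · have h1 : Nat.count (fun t => (N.traj t).1 = N.source) 1 = 1 := by
            rw [Nat.count_succ, Nat.count_zero, if_pos hClean0]
          have h2 := Nat.count_monotone (fun t => (N.traj t).1 = N.source)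
            (show 1 ≤ t + 1 by omega)
          omega
        · have h2 := Nat.count_monotone (fun t => (N.traj t).1 = N.source)
            (show t + 1 ≤ T by omega)
          omega
      have hmono : ∀ a b, a ∈ (Finset.range T).filter (fun t => (N.traj t).1 ∈ N.target) →
          a < b → Nat.count (fun t => (N.traj t).1 = N.source) (a + 1)
            < Nat.count (fun t => (N.traj t).1 = N.source) (b + 1) := by
        intro a b ha hab
        simp only [Finset.mem_filter, Finset.mem_range] at ha
        have hCa : (N.traj (a + 1)).1 = N.source := hclean1 a ha.2
        have h1 : Nat.count (fun t => (N.traj t).1 = N.source) (a + 2)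
            = Nat.count (fun t => (N.traj t).1 = N.source) (a + 1) + 1 := by
          rw [show a + 2 = (a + 1) + 1 by omega, Nat.count_succ, if_pos hCa]
        have h2 := Nat.count_monotone (fun t => (N.traj t).1 = N.source)
          (show a + 2 ≤ b + 1 by omega)
        omega
      have hinj : Set.InjOn (fun t => Nat.count (fun t => (N.traj t).1 = N.source) (t + 1))
          ((Finset.range T).filter (fun t => (N.traj t).1 ∈ N.target)) := by
        intro a ha b hb heq
        rcases lt_trichotomy a b with h | h | h
        · exact absurd heq (Nat.ne_of_lt (hmono a b ha h))
        · exact h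
        · exact absurd heq.symm (Nat.ne_of_lt (hmono b a hb h))
      calc ((Finset.range T).filter (fun t => (N.traj t).1 ∈ N.target)).card
          ≤ (Finset.Icc 1 (n ^ d)).card := Finset.card_le_card_of_injOn _ hmaps hinj
        _ = n ^ d := by simp
    -- infinitude of hits
    have hHinf : (setOf (fun t => (N.traj t).1 ∈ N.target)).Infinite := by
      obtain ⟨t0, ht0T, ht0⟩ : ∃ t0, t0 < T ∧ (N.traj t0).1 ∈ N.target := by
        by_contra hno
        push_neg at hno
        apply hp0
        rw [Nat.count_eq_card_filter_range, Finset.card_eq_zero, Finset.filter_eq_empty_iff]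
        intro t ht
        exact hno t (Finset.mem_range.mp ht)
      have hmemj : ∀ j : ℕ, (fun j : ℕ => t0 + j * T) j ∈
          setOf (fun t => (N.traj t).1 ∈ N.target) := by
        intro j
        induction j with
        | zero => show (N.traj (t0 + 0 * T)).1 ∈ N.target; simpa using ht0
        | succ j ih =>
          have e : t0 + (j + 1) * T = (t0 + j * T) + T := by ring
          show (N.traj (t0 + (j + 1) * T)).1 ∈ N.target
          rw [e, hHshift]
          exact ih
      apply Set.infinite_of_injective_forall_mem (f := fun j : ℕ => t0 + j * T) ?_ hmemj
      intro a b hab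
      simp only at hab
      have h : a * T = b * T := by omega
      exact Nat.eq_of_mul_eq_mul_right hT0 h
    refine ⟨Nat.count (fun t => (N.traj t).1 ∈ N.target) T, hppos, hple, ?_⟩
    intro k
    unfold RotorNetwork.hitSeq
    rw [nth_shift _ T hHshift hHinf k]
    exact (hinv _).1
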